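/- Let n be a nonnegative integer and let a, c be complex numbers with (1+a−c)_n ≠ 0, (c)_n ≠ 0, and (1−a−n)_n ≠ 0. Then _3F_2(−n, a/2, (a+1)/2 ; 1+a−c, c ; 4) = [(−1)^n (a)_n / (1+a−c)_n] · _3F_2(−n, (c−a−n)/2, (c−a−n+1)/2 ; 1−a−n, c ; 4), both sides being finite sums over k from 0 to n. -/

import Mathlib

open Finset

/-- The rising factorial (Pochhammer symbol) `(a)_k = a(a+1)⋯(a+k-1)`. -/
noncomputable def poch (a : ℂ) (k : ℕ) : ℂ := ∏ i ∈ Finset.range k, (a + i)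

lemma poch_zero (a : ℂ) : poch a 0 = 1 := by simp [poch]

lemma poch_succ (a : ℂ) (k : ℕ) : poch a (k + 1) = poch a k * (a + k) :=
  prod_range_succ _ _

lemma poch_add (a : ℂ) (m l : ℕ) : poch a (m + l) = poch a m * poch (a + m) l := by
  rw [poch, poch, poch, prod_range_add]
  congr 1
  refine prod_congr rfl fun i _ => ?_
  push_cast
  ring

lemma poch_split (a : ℂ) {k n : ℕ} (h : k ≤ n) :
    poch a n = poch a k * poch (a + k) (n - k) := by
  rw [← poch_add]
  congr 1
  omega

lemma poch_ne_zero_of_le {x : ℂ} {n : ℕ} (h : poch x n ≠ 0) {k : ℕ} (hk : k ≤ n) :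
    poch x k ≠ 0 := by
  intro h0
  exact h (by rw [poch_split x hk, h0, zero_mul])

lemma poch_reflect (x : ℂ) (k : ℕ) : poch x k = (-1) ^ k * poch (1 - x - k) k := by
  rw [poch, ← prod_range_reflect]
  have h : ∀ i ∈ range k, (x + ((k - 1 - i : ℕ) : ℂ)) = (-1) * ((1 - x - k) + i) := by
    intro i hi
    rw [mem_range] at hi
    have h1 : ((k - 1 - i : ℕ) : ℂ) = (k : ℂ) - 1 - i := by
      have h2 : k - 1 - i = k - (1 + i) := by omega
      rw [h2, Nat.cast_sub (by omega)]
      push_cast; ring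
    rw [h1]; ring
  rw [prod_congr rfl h, prod_mul_distrib, prod_const, card_range, poch]

lemma poch_dup (x : ℂ) (k : ℕ) :
    poch (x / 2) k * poch ((x + 1) / 2) k * 4 ^ k = poch x (2 * k) := by
  induction k with
  | zero => simp [poch]
  | succ k ih =>
    have h2 : 2 * (k + 1) = (2 * k) + 1 + 1 := by ring
    rw [h2, poch_succ, poch_succ, poch_succ, poch_succ, pow_succ, ← ih]
    push_cast
    ring

lemma poch_neg_nat (n k : ℕ) (h : k ≤ n) :
    poch (-(n : ℂ)) k = (-1) ^ k * ((k.factorial : ℂ) * (n.choose k : ℂ)) := by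
  have h1 : poch (-(n : ℂ)) k = (-1) ^ k * ∏ i ∈ range k, ((n : ℂ) - i) := by
    rw [poch]
    have h2 : ∀ i ∈ range k, (-(n : ℂ) + i) = (-1) * ((n : ℂ) - i) := by
      intro i _; ring
    rw [prod_congr rfl h2, prod_mul_distrib, prod_const, card_range]
  have h3 : ∏ i ∈ range k, ((n : ℂ) - i) = ((n.descFactorial k : ℕ) : ℂ) := by
    rw [Nat.descFactorial_eq_prod_range, Nat.cast_prod]
    refine prod_congr rfl fun i hi => ?_
    rw [mem_range] at hi
    rw [Nat.cast_sub (by omega)]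
  rw [h1, h3, Nat.descFactorial_eq_factorial_mul_choose]
  push_cast
  ring

lemma poch_vandermonde (x y : ℂ) (m : ℕ) :
    poch (x + y) m = ∑ j ∈ range (m + 1), (m.choose j : ℂ) * (poch x j * poch y (m - j)) := by
  induction m with
  | zero => simp [poch]
  | succ m ih =>
    rw [poch_succ, ih, sum_mul]
    have step : ∀ j ∈ range (m + 1),
        (m.choose j : ℂ) * (poch x j * poch y (m - j)) * (x + y + m)
          = (m.choose j : ℂ) * (poch x (j + 1) * poch y (m - j))
            + (m.choose j : ℂ) * (poch x j * poch y ((m - j) + 1)) := by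
      intro j hj
      rw [mem_range] at hj
      rw [poch_succ, poch_succ]
      have hc : ((m - j : ℕ) : ℂ) = (m : ℂ) - j := by
        rw [Nat.cast_sub (by omega)]
      rw [hc]
      ring
    rw [sum_congr rfl step, sum_add_distrib]
    have e1 : ∑ j ∈ range (m + 1), (m.choose j : ℂ) * (poch x j * poch y ((m - j) + 1))
        = (∑ j ∈ range m, (m.choose (j + 1) : ℂ) * (poch x (j + 1) * poch y (m - j)))
          + poch y (m + 1) := by
      rw [sum_range_succ']
      simp only [Nat.choose_zero_right, Nat.cast_one, poch_zero, one_mul, Nat.sub_zero]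
      congr 1
      refine sum_congr rfl fun j hj => ?_
      rw [mem_range] at hj
      have : m - (j + 1) + 1 = m - j := by omega
      rw [this]
    have e2 : ∑ j ∈ range (m + 1), (m.choose (j + 1) : ℂ) * (poch x (j + 1) * poch y (m - j))
        = ∑ j ∈ range m, (m.choose (j + 1) : ℂ) * (poch x (j + 1) * poch y (m - j)) := by
      rw [sum_range_succ]
      simp [Nat.choose_succ_self]
    conv_rhs => rw [sum_range_succ']
    simp only [Nat.succ_sub_succ_eq_sub, Nat.choose_succ_succ, Nat.cast_add,
      Nat.choose_zero_right, Nat.cast_one, poch_zero, one_mul, Nat.sub_zero, add_mul]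
    rw [sum_add_distrib, e1, ← e2]
    ring

/-- The symmetric kernel sum. -/
noncomputable def Ssum (n : ℕ) (u v : ℂ) : ℂ :=
  ∑ k ∈ range (n + 1),
    (n.choose k : ℂ) * (poch u (2 * k) * (poch v (n - k) * poch (u + v + n + k) (n - k)))

lemma Ssum_expand (n : ℕ) (u v : ℂ) :
    Ssum n u v = ∑ p ∈ (range (n + 1)).sigma (fun k => range (n - k + 1)),
      ((n.choose p.1 : ℂ) * ((n - p.1).choose p.2 : ℂ))
        * (poch u (2 * p.1 + p.2) * poch v (2 * (n - p.1) - p.2)) := by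
  rw [Ssum, sum_sigma]
  refine sum_congr rfl fun k hk => ?_
  rw [mem_range] at hk
  have hkn : k ≤ n := by omega
  have harg : u + v + (n : ℂ) + k = (u + ((2 * k : ℕ) : ℂ)) + (v + ((n - k : ℕ) : ℂ)) := by
    rw [Nat.cast_sub hkn]
    push_cast
    ring
  rw [harg, poch_vandermonde]
  simp only [Finset.mul_sum]
  refine sum_congr rfl fun j hj => ?_
  rw [mem_range] at hj
  have h1 : poch u (2 * k + j) = poch u (2 * k) * poch (u + ((2 * k : ℕ) : ℂ)) j :=
    poch_add u (2 * k) j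
  have h2 : poch v (2 * (n - k) - j) = poch v (n - k) * poch (v + ((n - k : ℕ) : ℂ)) (n - k - j) := by
    have h3 : 2 * (n - k) - j = (n - k) + ((n - k) - j) := by omega
    rw [h3, poch_add]
  rw [h1, h2]
  ring

lemma choose_aux {n k j : ℕ} (h : k + j ≤ n) :
    n.choose k * (n - k).choose j = n.choose (n - k - j) * (n - (n - k - j)).choose j := by
  have h1 : n - (n - k - j) = k + j := by omega
  rw [h1]
  have h2 : n.choose (n - k - j) = n.choose (k + j) := by
    have h2' : n - k - j = n - (k + j) := by omega
    rw [h2', Nat.choose_symm h]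
  rw [h2]
  have h3 : (k + j).choose k = (k + j).choose j := by
    have h3' := Nat.choose_symm (Nat.le_add_left j k)
    simpa using h3'
  have h4 := Nat.choose_mul (n := n) (k := k + j) (s := k) (Nat.le_add_right k j)
  simp only [Nat.add_sub_cancel_left] at h4
  rw [← h3, h4]

lemma Ssum_symm (n : ℕ) (u v : ℂ) : Ssum n u v = Ssum n v u := by
  rw [Ssum_expand, Ssum_expand]
  refine sum_nbij' (fun p => ⟨n - p.1 - p.2, p.2⟩) (fun p => ⟨n - p.1 - p.2, p.2⟩)
    ?_ ?_ ?_ ?_ ?_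
  · rintro ⟨k, j⟩ hp
    simp only [mem_sigma, mem_range] at hp ⊢
    omega
  · rintro ⟨k, j⟩ hp
    simp only [mem_sigma, mem_range] at hp ⊢
    omega
  · rintro ⟨k, j⟩ hp
    simp only [mem_sigma, mem_range] at hp
    show (⟨n - (n - k - j) - j, j⟩ : Σ _ : ℕ, ℕ) = ⟨k, j⟩
    have h : n - (n - k - j) - j = k := by omega
    rw [h]
  · rintro ⟨k, j⟩ hp
    simp only [mem_sigma, mem_range] at hp
    show (⟨n - (n - k - j) - j, j⟩ : Σ _ : ℕ, ℕ) = ⟨k, j⟩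
    have h : n - (n - k - j) - j = k := by omega
    rw [h]
  · rintro ⟨k, j⟩ hp
    simp only [mem_sigma, mem_range] at hp
    obtain ⟨hk, hj⟩ := hp
    have hkn : k + j ≤ n := by omega
    have e1 : 2 * (n - k - j) + j = 2 * (n - k) - j := by omega
    have e2 : 2 * (n - (n - k - j)) - j = 2 * k + j := by omega
    simp only
    rw [e1, e2]
    have hC := choose_aux hkn
    have hCC : ((n.choose k : ℂ)) * (((n - k).choose j : ℕ) : ℂ)
        = ((n.choose (n - k - j) : ℕ) : ℂ) * (((n - (n - k - j)).choose j : ℕ) : ℂ) := by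
      exact_mod_cast hC
    linear_combination (poch u (2 * k + j) * poch v (2 * (n - k) - j)) * hCC

theorem stmt_7 (n : ℕ) (a c : ℂ)
    (hac : poch (1 + a - c) n ≠ 0) (hc : poch c n ≠ 0)
    (han : poch (1 - a - (n : ℂ)) n ≠ 0) :
    ∑ k ∈ range (n + 1),
      (poch (-(n : ℂ)) k * poch (a / 2) k * poch ((a + 1) / 2) k) /
        ((Nat.factorial k : ℂ) * poch (1 + a - c) k * poch c k) * (4 : ℂ) ^ k
    = (-1 : ℂ) ^ n * poch a n / poch (1 + a - c) n *
      ∑ k ∈ range (n + 1),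
        (poch (-(n : ℂ)) k * poch ((c - a - (n : ℂ)) / 2) k *
          poch ((c - a - (n : ℂ) + 1) / 2) k) /
          ((Nat.factorial k : ℂ) * poch (1 - a - (n : ℂ)) k * poch c k) * (4 : ℂ) ^ k := by
  have hD : poch (1 + a - c) n * poch c n ≠ 0 := mul_ne_zero hac hc
  -- Left side times the denominator
  have hL : (∑ k ∈ range (n + 1),
      (poch (-(n : ℂ)) k * poch (a / 2) k * poch ((a + 1) / 2) k) /
        ((Nat.factorial k : ℂ) * poch (1 + a - c) k * poch c k) * (4 : ℂ) ^ k)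
      * (poch (1 + a - c) n * poch c n) = (-1) ^ n * Ssum n a (c - a - n) := by
    rw [sum_mul, Ssum, mul_sum]
    refine sum_congr rfl fun k hk => ?_
    rw [mem_range] at hk
    have hkn : k ≤ n := by omega
    have h1 := poch_split (1 + a - c) hkn
    have h2 := poch_split c hkn
    have h3 := poch_dup a k
    have h4 := poch_neg_nat n k hkn
    have h5 : poch (1 + a - c + (k : ℂ)) (n - k) = (-1) ^ (n - k) * poch (c - a - n) (n - k) := by
      have harg : 1 - (1 + a - c + (k : ℂ)) - ((n - k : ℕ) : ℂ) = c - a - n := by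
        rw [Nat.cast_sub hkn]; ring
      rw [poch_reflect (1 + a - c + (k : ℂ)) (n - k), harg]
    have h6 : poch (a + (c - a - (n : ℂ)) + n + k) (n - k) = poch (c + k) (n - k) := by
      have : a + (c - a - (n : ℂ)) + n + k = c + k := by ring
      rw [this]
    have hsign : ((-1 : ℂ)) ^ k * (-1) ^ (n - k) = (-1) ^ n := by
      rw [← pow_add]
      congr 1
      omega
    have hfac : ((Nat.factorial k : ℕ) : ℂ) ≠ 0 := by
      exact_mod_cast Nat.factorial_ne_zero k
    have hp1 : poch (1 + a - c) k ≠ 0 := poch_ne_zero_of_le hac hkn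
    have hp2 : poch c k ≠ 0 := poch_ne_zero_of_le hc hkn
    have hd : ((Nat.factorial k : ℂ) * poch (1 + a - c) k * poch c k) ≠ 0 :=
      mul_ne_zero (mul_ne_zero hfac hp1) hp2
    have hre : (poch (-(n : ℂ)) k * poch (a / 2) k * poch ((a + 1) / 2) k) /
        ((Nat.factorial k : ℂ) * poch (1 + a - c) k * poch c k) * (4 : ℂ) ^ k
        * (poch (1 + a - c) n * poch c n)
        = (poch (-(n : ℂ)) k * poch (a / 2) k * poch ((a + 1) / 2) k * (4 : ℂ) ^ k
            * (poch (1 + a - c) n * poch c n)) /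
          ((Nat.factorial k : ℂ) * poch (1 + a - c) k * poch c k) := by
      ring
    rw [hre, div_eq_iff hd, h6, h1, h2, h4, h5, ← h3, ← hsign]
    ring
  -- Right side times the denominator
  have hR : ((-1 : ℂ) ^ n * poch a n / poch (1 + a - c) n *
      ∑ k ∈ range (n + 1),
        (poch (-(n : ℂ)) k * poch ((c - a - (n : ℂ)) / 2) k *
          poch ((c - a - (n : ℂ) + 1) / 2) k) /
          ((Nat.factorial k : ℂ) * poch (1 - a - (n : ℂ)) k * poch c k) * (4 : ℂ) ^ k)
      * (poch (1 + a - c) n * poch c n) = (-1) ^ n * Ssum n (c - a - n) a := by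
    have key : poch a n * poch c n * (∑ k ∈ range (n + 1),
        (poch (-(n : ℂ)) k * poch ((c - a - (n : ℂ)) / 2) k *
          poch ((c - a - (n : ℂ) + 1) / 2) k) /
          ((Nat.factorial k : ℂ) * poch (1 - a - (n : ℂ)) k * poch c k) * (4 : ℂ) ^ k)
        = Ssum n (c - a - n) a := by
      rw [mul_sum, Ssum]
      refine sum_congr rfl fun k hk => ?_
      rw [mem_range] at hk
      have hkn : k ≤ n := by omega
      have h2 := poch_split c hkn
      have h3 := poch_dup (c - a - (n : ℂ)) k
      have h4 := poch_neg_nat n k hkn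
      have h7 : poch a n = poch a (n - k) * poch (a + ((n - k : ℕ) : ℂ)) k := by
        have := poch_add a (n - k) k
        rw [show (n - k) + k = n from by omega] at this
        exact this
      have h8 : poch (1 - a - (n : ℂ)) k = (-1) ^ k * poch (a + ((n - k : ℕ) : ℂ)) k := by
        have harg : 1 - (1 - a - (n : ℂ)) - (k : ℂ) = a + ((n - k : ℕ) : ℂ) := by
          rw [Nat.cast_sub hkn]; ring
        rw [poch_reflect (1 - a - (n : ℂ)) k, harg]
      have h6 : poch (c - a - (n : ℂ) + a + n + k) (n - k) = poch (c + k) (n - k) := by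
        have : c - a - (n : ℂ) + a + n + k = c + k := by ring
        rw [this]
      have hfac : ((Nat.factorial k : ℕ) : ℂ) ≠ 0 := by
        exact_mod_cast Nat.factorial_ne_zero k
      have hp2 : poch c k ≠ 0 := poch_ne_zero_of_le hc hkn
      have hp3 : poch (1 - a - (n : ℂ)) k ≠ 0 := poch_ne_zero_of_le han hkn
      have hp4 : poch (a + ((n - k : ℕ) : ℂ)) k ≠ 0 := by
        intro h0
        apply hp3
        rw [h8, h0, mul_zero]
      have hd : ((Nat.factorial k : ℂ) * poch (1 - a - (n : ℂ)) k * poch c k) ≠ 0 :=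
        mul_ne_zero (mul_ne_zero hfac hp3) hp2
      have hre : poch a n * poch c n *
          ((poch (-(n : ℂ)) k * poch ((c - a - (n : ℂ)) / 2) k *
            poch ((c - a - (n : ℂ) + 1) / 2) k) /
            ((Nat.factorial k : ℂ) * poch (1 - a - (n : ℂ)) k * poch c k) * (4 : ℂ) ^ k)
          = (poch a n * poch c n * (poch (-(n : ℂ)) k * poch ((c - a - (n : ℂ)) / 2) k *
              poch ((c - a - (n : ℂ) + 1) / 2) k) * (4 : ℂ) ^ k) /
            ((Nat.factorial k : ℂ) * poch (1 - a - (n : ℂ)) k * poch c k) := by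
        ring
      rw [hre, div_eq_iff hd, h6, h7, h2, h4, ← h3, h8]
      ring
    have gen : ∀ T : ℂ, ((-1 : ℂ) ^ n * poch a n / poch (1 + a - c) n * T)
        * (poch (1 + a - c) n * poch c n) = (-1) ^ n * (poch a n * poch c n * T) := by
      intro T
      have h9 : ((-1 : ℂ) ^ n * poch a n / poch (1 + a - c) n * T)
          * (poch (1 + a - c) n * poch c n)
          = (-1) ^ n * (poch a n * poch c n * T)
            * (poch (1 + a - c) n / poch (1 + a - c) n) := by ring
      rw [h9, div_self hac, mul_one]
    rw [gen, key]
  exact mul_right_cancel₀ hD (by rw [hL, hR, Ssum_symm])
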